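/- arXiv:1208.6517 — 3 statements merged into one kernel-verified Lean document; each statement's English description precedes it below -/
import Mathlib

section
/- Let R be a commutative ring, let I ⊆ J be ideals of R, and let f ∈ R be an element such that I : (f) = I (that is, f is a nonzerodivisor on R/I). Then the colon ideal (I + f·J) : (I + (f)) equals J. (This is the key computation showing that the ideal (I, f) is directly linked to J by the ideal I + f·J.) -/
/-- Let `R` be a commutative ring, `I ⊆ J` ideals, and `f ∈ R` with `I : (f) = I`
(i.e. `f` is a nonzerodivisor on `R/I`). Then `(I + f·J) : (I + (f)) = J`. -/
theorem colon_of_link {R : Type*} [CommRing R] (I J : Ideal R) (hIJ : I ≤ J)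
    (f : R) (hf : I.colon (Ideal.span {f}) = I) :
    (I + Ideal.span {f} * J).colon (I + Ideal.span {f}) = J := by
  apply le_antisymm
  · intro r hr
    rw [Submodule.mem_colon] at hr
    have hfmem : f ∈ I + Ideal.span {f} :=
      Submodule.mem_sup_right (Ideal.mem_span_singleton_self f)
    have h1 : r * f ∈ I + Ideal.span {f} * J := hr f hfmem
    obtain ⟨i, hi, y, hy, hiy⟩ := Submodule.mem_sup.mp h1
    obtain ⟨z, hz, hfz⟩ := Ideal.mem_span_singleton_mul.mp hy
    have hrz : (r - z) ∈ I.colon (Ideal.span {f}) := by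
      rw [Submodule.mem_colon]
      intro p hp
      obtain ⟨c, rfl⟩ := Ideal.mem_span_singleton'.mp hp
      have : (r - z) * f ∈ I := by
        have : (r - z) * f = i := by
          rw [sub_mul]
          rw [← hiy, ← hfz]
          ring
        rw [this]; exact hi
      have := Ideal.mul_mem_left _ c this
      simpa [mul_comm, mul_assoc, smul_eq_mul, mul_left_comm] using this
    rw [hf] at hrz
    have : r = (r - z) + z := by ring
    rw [this]
    exact J.add_mem (hIJ hrz) hz
  · intro j hj
    rw [Submodule.mem_colon]
    intro p hp
    obtain ⟨i, hi, y, hy, rfl⟩ := Submodule.mem_sup.mp hp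
    obtain ⟨c, rfl⟩ := Ideal.mem_span_singleton'.mp hy
    have h1 : j • i ∈ I + Ideal.span {f} * J :=
      Submodule.mem_sup_left (I.mul_mem_left j hi)
    have h2 : j • (c * f) ∈ I + Ideal.span {f} * J := by
      apply Submodule.mem_sup_right
      rw [Ideal.mem_span_singleton_mul]
      exact ⟨c * j, J.mul_mem_left c hj, by simp [smul_eq_mul]; ring⟩
    simpa [smul_add, mul_add, smul_eq_mul] using Submodule.add_mem _ h1 h2
end

section
/- Let R be a commutative ring, let J be an ideal of R, let a ∈ J, and let f ∈ R be an element such that J : (f) = J (that is, f is a nonzerodivisor on R/J). Then f·J + (a) = J ∩ ((a) + (f)). (This is the ideal-theoretic identity underlying the basic double link I_Y = Q·I_C + ⟨F⟩ = I_C ∩ ⟨F, Q⟩ used in the proof of Theorem 3.2.) -/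
/-- Basic double link identity: if `a ∈ J` and `J : (f) = J`, then
`f·J + (a) = J ⊓ ((a) + (f))`. -/
theorem basic_double_link {R : Type*} [CommRing R] (J : Ideal R) (a f : R)
    (ha : a ∈ J) (hf : J.colon (Ideal.span {f}) = J) :
    Ideal.span {f} * J + Ideal.span {a} = J ⊓ (Ideal.span {a} + Ideal.span {f}) := by
  apply le_antisymm
  · apply sup_le
    · exact le_inf Ideal.mul_le_right (le_trans Ideal.mul_le_left (by rw [Ideal.add_eq_sup]; exact le_sup_right))
    · exact le_inf ((Ideal.span_singleton_le_iff_mem J).mpr ha) (by rw [Ideal.add_eq_sup]; exact le_sup_left)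
  · rintro x ⟨hxJ, hx2⟩
    obtain ⟨y, hy, z, hz, rfl⟩ := Submodule.mem_sup.mp hx2
    rw [Ideal.mem_span_singleton] at hy hz
    obtain ⟨r, rfl⟩ := hy
    obtain ⟨s, rfl⟩ := hz
    have hsf : f * s ∈ J := by
      have : a * r ∈ J := Ideal.mul_mem_right _ _ ha
      have := J.sub_mem hxJ this
      simpa using this
    have hs : s ∈ J := by
      rw [← hf]
      rw [Ideal.mem_colon_span_singleton, mul_comm]
      exact hsf
    rw [Ideal.add_eq_sup, Submodule.mem_sup]
    refine ⟨f * s, Ideal.mul_mem_mul (Ideal.mem_span_singleton_self f) hs, a * r,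
      Ideal.mul_mem_right _ _ (Ideal.mem_span_singleton_self a), by ring⟩
end

section
/- Let R be a commutative ring, let I ⊆ J be ideals of R, let S = R[t] be the polynomial ring in one new variable t, and let I·S and J·S denote the extensions of I and J to S. Then the colon ideal (I·S + t·(J·S)) : (I·S + (t)) equals J·S. (This is the direct link, performed in one more variable, that underlies Theorem 2.3: the ideal (I·S, t), which defines X viewed in the larger projective space, is directly linked to J·S by the ideal I·S + t·J·S.) -/
open Polynomial Ideal

/-- Let `I ⊆ J` be ideals of `R` and `S = R[t]`. Then
`(I·S + t·(J·S)) : (I·S + (t)) = J·S`. -/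
theorem link_in_one_more_variable {R : Type*} [CommRing R] (I J : Ideal R) (hIJ : I ≤ J) :
    (Ideal.map (Polynomial.C : R →+* Polynomial R) I +
        Ideal.span {(Polynomial.X : Polynomial R)} *
          Ideal.map (Polynomial.C : R →+* Polynomial R) J).colon
      (Ideal.map (Polynomial.C : R →+* Polynomial R) I +
        Ideal.span {(Polynomial.X : Polynomial R)}) =
      Ideal.map (Polynomial.C : R →+* Polynomial R) J := by
  apply le_antisymm
  · intro f hf
    have hX : f * X ∈ Ideal.map (C : R →+* R[X]) I +
        Ideal.span {(X : R[X])} * Ideal.map (C : R →+* R[X]) J := by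
      have := Submodule.mem_colon.mp hf X
        (Submodule.mem_sup_right (Ideal.subset_span rfl))
      simpa [smul_eq_mul] using this
    obtain ⟨a, ha, z, hz, hsum⟩ := Submodule.mem_sup.mp hX
    obtain ⟨b, hb, hzb⟩ := Ideal.mem_span_singleton_mul.mp hz
    -- a = X * (f - b)
    have ha' : a = X * (f - b) := by
      have : a + X * b = f * X := by rw [← hzb] at hsum; exact hsum
      ring_nf
      ring_nf at this
      linear_combination this
    have hfb : f - b ∈ Ideal.map (C : R →+* R[X]) J := by
      rw [Ideal.mem_map_C_iff]
      intro n
      have : a.coeff (n + 1) ∈ I := (Ideal.mem_map_C_iff.mp ha) (n + 1)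
      rw [ha', coeff_X_mul] at this
      exact hIJ this
    have : f = (f - b) + b := by ring
    rw [this]
    exact Ideal.add_mem _ hfb hb
  · intro g hg
    rw [Submodule.mem_colon]
    intro p hp
    obtain ⟨a, ha, x, hx, rfl⟩ := Submodule.mem_sup.mp hp
    rw [smul_eq_mul, mul_add]
    apply Submodule.add_mem
    · exact Submodule.mem_sup_left (Ideal.mul_mem_left _ g ha)
    · exact Submodule.mem_sup_right (mul_comm x g ▸ Ideal.mul_mem_mul hx hg)
end
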